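/- Let T be a strict 2-endofunctor of a strict 2-category 𝕏 and let μ : T∘T ⟹ T be a lax natural transformation. Then the family of 2-cells μ_{μ_X} : μ_{TX} ∘ T²(μ_X) ⟹ T(μ_X) ∘ μ_{T²X} (the lax-naturality 2-cell of μ at the 1-cell μ_X : T²X → TX), indexed by the objects X of 𝕏, is a modification from the composite lax natural transformation (μT) ∘ (T²μ) to (Tμ) ∘ (μT²), where (μT)_X = μ_{TX}, (T²μ)_X = T²(μ_X), (Tμ)_X = T(μ_X), and (μT²)_X = μ_{T²X}. That is, for every 1-cell g : X → Y, the modification equation holds between μ_{μ_X}, μ_{μ_Y} and the naturality 2-cells of the composite transformations at g. -/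

import Mathlib

open CategoryTheory Bicategory

universe w₁ w₂ w₃ v₁ v₂ v₃ u₁ u₂ u₃

/-- A strict 2-functor between strict bicategories: it preserves identities and
compositions of 1-cells on the nose, is functorial on 2-cells, and is compatible
with whiskering. -/
structure Strict2Functor (B : Type u₁) (C : Type u₂) [Bicategory.{w₁, v₁} B]
    [Bicategory.Strict B] [Bicategory.{w₂, v₂} C] [Bicategory.Strict C] where
  obj : B → C
  map : ∀ {a b : B}, (a ⟶ b) → (obj a ⟶ obj b)
  map₂ : ∀ {a b : B} {f g : a ⟶ b}, (f ⟶ g) → (map f ⟶ map g)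
  map_id : ∀ a : B, map (𝟙 a) = 𝟙 (obj a)
  map_comp : ∀ {a b c : B} (f : a ⟶ b) (g : b ⟶ c), map (f ≫ g) = map f ≫ map g
  map₂_id : ∀ {a b : B} (f : a ⟶ b), map₂ (𝟙 f) = 𝟙 (map f)
  map₂_comp : ∀ {a b : B} {f g h : a ⟶ b} (η : f ⟶ g) (θ : g ⟶ h),
    map₂ (η ≫ θ) = map₂ η ≫ map₂ θ
  map₂_whiskerLeft : ∀ {a b c : B} (f : a ⟶ b) {g h : b ⟶ c} (η : g ⟶ h),
    map₂ (f ◁ η) = eqToHom (map_comp f g) ≫ (map f ◁ map₂ η) ≫ eqToHom (map_comp f h).symm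
  map₂_whiskerRight : ∀ {a b c : B} {f g : a ⟶ b} (η : f ⟶ g) (h : b ⟶ c),
    map₂ (η ▷ h) = eqToHom (map_comp f h) ≫ (map₂ η ▷ map h) ≫ eqToHom (map_comp g h).symm

namespace Strict2Functor

variable {B : Type u₁} {C : Type u₂} {D : Type u₃} [Bicategory.{w₁, v₁} B] [Bicategory.Strict B]
  [Bicategory.{w₂, v₂} C] [Bicategory.Strict C] [Bicategory.{w₃, v₃} D] [Bicategory.Strict D]

lemma map₂_eqToHom (F : Strict2Functor B C) {a b : B} {f g : a ⟶ b} (h : f = g) :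
    F.map₂ (eqToHom h) = eqToHom (congrArg F.map h) := by
  subst h; simp [F.map₂_id]

/-- The identity strict 2-functor. -/
def id (B : Type u₁) [Bicategory.{w₁, v₁} B] [Bicategory.Strict B] : Strict2Functor B B where
  obj a := a
  map f := f
  map₂ η := η
  map_id _ := rfl
  map_comp _ _ := rfl
  map₂_id _ := rfl
  map₂_comp _ _ := rfl
  map₂_whiskerLeft _ _ := by simp
  map₂_whiskerRight _ _ := by simp

/-- Composition of strict 2-functors (diagrammatic order). -/
def comp (F : Strict2Functor B C) (G : Strict2Functor C D) : Strict2Functor B D where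
  obj a := G.obj (F.obj a)
  map f := G.map (F.map f)
  map₂ η := G.map₂ (F.map₂ η)
  map_id a := by (try dsimp only); rw [F.map_id, G.map_id]
  map_comp f g := by (try dsimp only); rw [F.map_comp, G.map_comp]
  map₂_id f := by (try dsimp only); rw [F.map₂_id, G.map₂_id]
  map₂_comp η θ := by (try dsimp only); rw [F.map₂_comp, G.map₂_comp]
  map₂_whiskerLeft := by
    intro a b c f g h η
    try dsimp only
    rw [F.map₂_whiskerLeft, G.map₂_comp, G.map₂_comp, G.map₂_eqToHom, G.map₂_eqToHom,
      G.map₂_whiskerLeft]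
    simp [eqToHom_trans]
  map₂_whiskerRight := by
    intro a b c f g η h
    try dsimp only
    rw [F.map₂_whiskerRight, G.map₂_comp, G.map₂_comp, G.map₂_eqToHom, G.map₂_eqToHom,
      G.map₂_whiskerRight]
    simp [eqToHom_trans]

end Strict2Functor

variable {B : Type u₁} {C : Type u₂} {D : Type u₃} [Bicategory.{w₁, v₁} B] [Bicategory.Strict B]
  [Bicategory.{w₂, v₂} C] [Bicategory.Strict C] [Bicategory.{w₃, v₃} D] [Bicategory.Strict D]

/-- The data of a lax natural transformation: components and naturality 2-cells. -/
structure LaxTransCore (S T : Strict2Functor B C) where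
  app : ∀ a : B, S.obj a ⟶ T.obj a
  naturality : ∀ {a b : B} (g : a ⟶ b), S.map g ≫ app b ⟶ app a ≫ T.map g

/-- A lax natural transformation between strict 2-functors: components `app a`,
naturality 2-cells `naturality g : S g ≫ app b ⟶ app a ≫ T g`, compatible with 2-cells,
with `naturality (𝟙 a)` an identity and `naturality` of a composite given by pasting. -/
structure LaxTrans (S T : Strict2Functor B C) extends LaxTransCore S T where
  naturality_id : ∀ a : B,
    naturality (𝟙 a) = eqToHom (by rw [S.map_id, T.map_id, Category.id_comp, Category.comp_id])
  naturality_comp : ∀ {a b c : B} (g : a ⟶ b) (h : b ⟶ c),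
    naturality (g ≫ h) =
      eqToHom (by rw [S.map_comp, Category.assoc]) ≫
      (S.map g ◁ naturality h) ≫
      eqToHom (by rw [Category.assoc]) ≫
      (naturality g ▷ T.map h) ≫
      eqToHom (by rw [T.map_comp, Category.assoc])
  naturality₂ : ∀ {a b : B} {g g' : a ⟶ b} (ζ : g ⟶ g'),
    (S.map₂ ζ ▷ app b) ≫ naturality g' = naturality g ≫ (app a ◁ T.map₂ ζ)

namespace LaxTransCore

variable {S T R : Strict2Functor B C}

/-- Vertical composite of (the data of) lax natural transformations. -/
def vcomp (φ : LaxTransCore S T) (ψ : LaxTransCore T R) : LaxTransCore S R where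
  app a := φ.app a ≫ ψ.app a
  naturality {a b} g :=
    eqToHom (by rw [Category.assoc]) ≫
    (φ.naturality g ▷ ψ.app b) ≫
    eqToHom (by rw [Category.assoc]) ≫
    (φ.app a ◁ ψ.naturality g) ≫
    eqToHom (by rw [Category.assoc])

/-- Post-whiskering of (the data of) a lax natural transformation with a strict 2-functor:
the transformation `Gφ` with components `G (φ a)`. -/
def post (φ : LaxTransCore S T) (G : Strict2Functor C D) :
    LaxTransCore (S.comp G) (T.comp G) where
  app a := G.map (φ.app a)
  naturality {a b} g :=
    eqToHom (G.map_comp _ _).symm ≫ G.map₂ (φ.naturality g) ≫ eqToHom (G.map_comp _ _)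

/-- Pre-whiskering of (the data of) a lax natural transformation with a strict 2-functor:
the transformation `φG` with components `φ (G a)`. -/
def pre {S T : Strict2Functor C D} (φ : LaxTransCore S T) (G : Strict2Functor B C) :
    LaxTransCore (G.comp S) (G.comp T) where
  app a := φ.app (G.obj a)
  naturality {_ _} g := φ.naturality (G.map g)

/-- The identity lax natural transformation on a strict 2-functor. -/
def id (F : Strict2Functor B C) : LaxTransCore F F where
  app a := 𝟙 (F.obj a)
  naturality {_ _} g := eqToHom (by rw [Category.id_comp, Category.comp_id])

end LaxTransCore

/-- `m` is a modification between (the underlying data of) lax natural transformations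
`σ ⇛ τ` if for every 1-cell `g` the modification square commutes. -/
def IsModification {S T : Strict2Functor B C} (σ τ : LaxTransCore S T)
    (m : ∀ a : B, σ.app a ⟶ τ.app a) : Prop :=
  ∀ {a b : B} (g : a ⟶ b),
    (S.map g ◁ m b) ≫ τ.naturality g = σ.naturality g ≫ (m a ▷ T.map g)

/-- For a strict 2-endofunctor `T` of a strict 2-category `𝕏` and a lax
natural transformation `μ : T ∘ T ⟹ T`, the family of lax-naturality 2-cells
`μ_{μ_x} : μ_{Tx} ∘ T²(μ_x) ⟹ T(μ_x) ∘ μ_{T²x}` is a modification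
`(μT) ∘ (T²μ) ⇛ (Tμ) ∘ (μT²)`. -/
theorem muMu_isModification {X : Type u₁} [Bicategory.{w₁, v₁} X] [Bicategory.Strict X]
    (T : Strict2Functor X X) (μ : LaxTrans (T.comp T) T) :
    IsModification ((μ.toLaxTransCore.post (T.comp T)).vcomp (μ.toLaxTransCore.pre T))
      ((μ.toLaxTransCore.pre (T.comp T)).vcomp (μ.toLaxTransCore.post T))
      (fun x => μ.naturality (μ.app x)) := by
  intro a b g
  have key := μ.naturality₂ (μ.naturality g)
  rw [μ.naturality_comp, μ.naturality_comp] at key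
  dsimp only [IsModification, LaxTransCore.vcomp, LaxTransCore.post, LaxTransCore.pre] at key ⊢
  delta Strict2Functor.comp at key ⊢
  dsimp only at key ⊢
  simp only [IsModification, LaxTransCore.vcomp, LaxTransCore.post, LaxTransCore.pre,
    Strict2Functor.comp, comp_whiskerRight, Bicategory.whiskerLeft_comp, eqToHom_whiskerRight,
    whiskerLeft_eqToHom, eqToHom_trans, eqToHom_trans_assoc, Category.assoc, eqToHom_refl,
    Category.comp_id, Category.id_comp] at key ⊢
  simp only [← Category.assoc] at key ⊢
  rw [comp_eqToHom_iff] at key ⊢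
  replace key := key.symm
  simp only [Category.assoc] at key
  rw [eqToHom_comp_iff] at key
  simp only [← Category.assoc] at key
  rw [comp_eqToHom_iff] at key
  simp only [Category.assoc, eqToHom_trans, eqToHom_trans_assoc, eqToHom_refl,
    Category.comp_id, Category.id_comp] at key ⊢
  exact key
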